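/- Let σ : ℝ × ℝ → ℝ be nonnegative and measurable, and let f : ℝ³ → ℝ be positive and measurable. Define Γ = -∫_{r>0} ∫_{S²} ∫_{S²} σ(r², ω·e) r³ [f(r ω) - f(r e)] ln(f(r e)) dω de dr (assuming integrability). Then Γ = (1/2) ∫∫∫ σ(r², ω·e) r³ (f(r ω) - f(r e)) ln(f(r ω)/f(r e)) dω de dr, and hence Γ ≥ 0. Moreover, if σ is strictly positive then Γ = 0 implies that f(r ω) = f(r e) for almost every r > 0 and ω, e ∈ S², i.e., f is isotropic. -/

import Mathlib

open MeasureTheory Metric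

lemma log_sign' {a b : ℝ} (ha : 0 < a) (hb : 0 < b) :
    0 ≤ (a - b) * Real.log (a / b) := by
  rcases le_total b a with h | h
  · exact mul_nonneg (by linarith) (Real.log_nonneg ((one_le_div hb).2 h))
  · exact mul_nonneg_of_nonpos_of_nonpos (by linarith)
      (Real.log_nonpos (by positivity) ((div_le_one hb).2 h))

lemma eq_of_mul_log_eq_zero {a b : ℝ} (ha : 0 < a) (hb : 0 < b)
    (h : (a - b) * Real.log (a / b) = 0) : a = b := by
  rcases mul_eq_zero.1 h with h' | h'
  · linarith
  · rcases Real.log_eq_zero.1 h' with h'' | h'' | h''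
    · exact absurd h'' (by positivity)
    · field_simp at h''; linarith
    · nlinarith [div_pos ha hb]

/-- Zero-order entropy production in electron–heavy-particle collisions:
`Γ = -∫∫∫ σ(r², ω·e) r³ [f(rω) - f(re)] ln(f(re))` equals the symmetrized form
`(1/2)∫∫∫ σ(r², ω·e) r³ (f(rω) - f(re)) ln(f(rω)/f(re))`, hence `Γ ≥ 0`; if `σ` is
strictly positive, `Γ = 0` forces `f(rω) = f(re)` almost everywhere, i.e. `f` isotropic. -/
theorem entropy_production_symmetrization
    (σ : ℝ → ℝ → ℝ) (hσ_meas : Measurable (Function.uncurry σ))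
    (hσ_nonneg : ∀ x y, 0 ≤ σ x y)
    (f : EuclideanSpace ℝ (Fin 3) → ℝ) (hf_meas : Measurable f)
    (hf_pos : ∀ x, 0 < f x)
    (μS : Measure (sphere (0 : EuclideanSpace ℝ (Fin 3)) 1))
    (hμS : μS = (volume : Measure (EuclideanSpace ℝ (Fin 3))).toSphere)
    (h_int1 : Integrable
      (fun p : ℝ × (sphere (0 : EuclideanSpace ℝ (Fin 3)) 1 ×
          sphere (0 : EuclideanSpace ℝ (Fin 3)) 1) =>
        σ (p.1 ^ 2) (inner ℝ (p.2.1 : EuclideanSpace ℝ (Fin 3)) (p.2.2 : EuclideanSpace ℝ (Fin 3))) *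
          p.1 ^ 3 *
          (f (p.1 • (p.2.1 : EuclideanSpace ℝ (Fin 3))) -
            f (p.1 • (p.2.2 : EuclideanSpace ℝ (Fin 3)))) *
          Real.log (f (p.1 • (p.2.2 : EuclideanSpace ℝ (Fin 3)))))
      ((volume.restrict (Set.Ioi (0 : ℝ))).prod (μS.prod μS)))
    (h_int2 : Integrable
      (fun p : ℝ × (sphere (0 : EuclideanSpace ℝ (Fin 3)) 1 ×
          sphere (0 : EuclideanSpace ℝ (Fin 3)) 1) =>
        σ (p.1 ^ 2) (inner ℝ (p.2.1 : EuclideanSpace ℝ (Fin 3)) (p.2.2 : EuclideanSpace ℝ (Fin 3))) *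
          p.1 ^ 3 *
          (f (p.1 • (p.2.1 : EuclideanSpace ℝ (Fin 3))) -
            f (p.1 • (p.2.2 : EuclideanSpace ℝ (Fin 3)))) *
          Real.log (f (p.1 • (p.2.1 : EuclideanSpace ℝ (Fin 3))) /
            f (p.1 • (p.2.2 : EuclideanSpace ℝ (Fin 3)))))
      ((volume.restrict (Set.Ioi (0 : ℝ))).prod (μS.prod μS)))
    (Γ : ℝ)
    (hΓ : Γ = -(∫ r in Set.Ioi (0 : ℝ), ∫ ω, ∫ e,
        σ (r ^ 2) (inner ℝ (ω : EuclideanSpace ℝ (Fin 3)) (e : EuclideanSpace ℝ (Fin 3))) *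
          r ^ 3 *
          (f (r • (ω : EuclideanSpace ℝ (Fin 3))) - f (r • (e : EuclideanSpace ℝ (Fin 3)))) *
          Real.log (f (r • (e : EuclideanSpace ℝ (Fin 3))))
        ∂μS ∂μS)) :
    Γ = (1 / 2) * (∫ r in Set.Ioi (0 : ℝ), ∫ ω, ∫ e,
        σ (r ^ 2) (inner ℝ (ω : EuclideanSpace ℝ (Fin 3)) (e : EuclideanSpace ℝ (Fin 3))) *
          r ^ 3 *
          (f (r • (ω : EuclideanSpace ℝ (Fin 3))) - f (r • (e : EuclideanSpace ℝ (Fin 3)))) *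
          Real.log (f (r • (ω : EuclideanSpace ℝ (Fin 3))) /
            f (r • (e : EuclideanSpace ℝ (Fin 3))))
        ∂μS ∂μS) ∧
    0 ≤ Γ ∧
    ((∀ x y, 0 < σ x y) → Γ = 0 →
      ∀ᵐ p : ℝ × (sphere (0 : EuclideanSpace ℝ (Fin 3)) 1 ×
          sphere (0 : EuclideanSpace ℝ (Fin 3)) 1)
        ∂((volume.restrict (Set.Ioi (0 : ℝ))).prod (μS.prod μS)),
        f (p.1 • (p.2.1 : EuclideanSpace ℝ (Fin 3))) =
          f (p.1 • (p.2.2 : EuclideanSpace ℝ (Fin 3)))) := by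
  haveI : IsFiniteMeasure μS := hμS ▸ inferInstance
  set ν : Measure (ℝ × (↥(sphere (0 : EuclideanSpace ℝ (Fin 3)) 1) ×
      ↥(sphere (0 : EuclideanSpace ℝ (Fin 3)) 1))) :=
    (volume.restrict (Set.Ioi (0 : ℝ))).prod (μS.prod μS) with hν
  set G : ℝ × (↥(sphere (0 : EuclideanSpace ℝ (Fin 3)) 1) × ↥(sphere (0 : EuclideanSpace ℝ (Fin 3)) 1)) → ℝ := fun p =>
    σ (p.1 ^ 2) (inner ℝ (p.2.1 : EuclideanSpace ℝ (Fin 3)) (p.2.2 : EuclideanSpace ℝ (Fin 3))) *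
      p.1 ^ 3 *
      (f (p.1 • (p.2.1 : EuclideanSpace ℝ (Fin 3))) -
        f (p.1 • (p.2.2 : EuclideanSpace ℝ (Fin 3)))) *
      Real.log (f (p.1 • (p.2.2 : EuclideanSpace ℝ (Fin 3)))) with hG
  set K : ℝ × (↥(sphere (0 : EuclideanSpace ℝ (Fin 3)) 1) × ↥(sphere (0 : EuclideanSpace ℝ (Fin 3)) 1)) → ℝ := fun p =>
    σ (p.1 ^ 2) (inner ℝ (p.2.1 : EuclideanSpace ℝ (Fin 3)) (p.2.2 : EuclideanSpace ℝ (Fin 3))) *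
      p.1 ^ 3 *
      (f (p.1 • (p.2.1 : EuclideanSpace ℝ (Fin 3))) -
        f (p.1 • (p.2.2 : EuclideanSpace ℝ (Fin 3)))) *
      Real.log (f (p.1 • (p.2.1 : EuclideanSpace ℝ (Fin 3))) /
        f (p.1 • (p.2.2 : EuclideanSpace ℝ (Fin 3)))) with hK
  -- the swap equivalence
  let E : (ℝ × (↥(sphere (0 : EuclideanSpace ℝ (Fin 3)) 1) × ↥(sphere (0 : EuclideanSpace ℝ (Fin 3)) 1))) ≃ᵐ _ :=
    (MeasurableEquiv.refl ℝ).prodCongr MeasurableEquiv.prodComm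
  have hE : MeasurePreserving E ν ν := by
    exact (MeasurePreserving.id _).prod Measure.measurePreserving_swap
  -- G composed with swap equals K - G pointwise
  have hKG : ∀ p, K p = -(G (E p)) - G p := by
    intro p
    have hlog : Real.log (f (p.1 • (p.2.1 : EuclideanSpace ℝ (Fin 3))) /
        f (p.1 • (p.2.2 : EuclideanSpace ℝ (Fin 3)))) =
        Real.log (f (p.1 • (p.2.1 : EuclideanSpace ℝ (Fin 3)))) -
        Real.log (f (p.1 • (p.2.2 : EuclideanSpace ℝ (Fin 3)))) :=
      Real.log_div (hf_pos _).ne' (hf_pos _).ne'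
    have hinner : (inner ℝ (p.2.2 : EuclideanSpace ℝ (Fin 3)) (p.2.1 : EuclideanSpace ℝ (Fin 3)) : ℝ)
        = inner ℝ (p.2.1 : EuclideanSpace ℝ (Fin 3)) (p.2.2 : EuclideanSpace ℝ (Fin 3)) :=
      real_inner_comm _ _
    simp only [hK, hG, MeasurableEquiv.prodCongr, MeasurableEquiv.prodComm,
      MeasurableEquiv.refl, MeasurableEquiv.coe_mk, Equiv.prodCongr_apply, Equiv.coe_fn_mk,
      Equiv.refl_apply, Equiv.prodComm_apply, Prod.map, Prod.swap, E]
    rw [hlog, hinner]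
    ring
  have hGE : ∫ p, G (E p) ∂ν = ∫ p, G p ∂ν := hE.integral_comp' G
  have hintGE : Integrable (fun p => G (E p)) ν :=
    (hE.integrable_comp_emb E.measurableEmbedding).2 h_int1
  have hintGE' : Integrable (fun p => -G (E p)) ν := hintGE.neg
  have hintK : Integrable K ν := h_int2
  -- the key identity on product integrals
  have key : ∫ p, K p ∂ν = -2 * ∫ p, G p ∂ν := by
    have : ∫ p, K p ∂ν = ∫ p, (-(G (E p)) - G p) ∂ν := by
      exact integral_congr_ae (Filter.Eventually.of_forall hKG)
    rw [this, integral_sub hintGE' h_int1, integral_neg, hGE]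
    ring
  -- iterated = product
  have hG_it : ∫ p, G p ∂ν = ∫ r in Set.Ioi (0 : ℝ), ∫ ω, ∫ e, G (r, (ω, e)) ∂μS ∂μS := by
    rw [hν, integral_prod _ h_int1]
    refine integral_congr_ae ?_
    filter_upwards [h_int1.prod_right_ae] with r hr
    exact integral_prod _ hr
  have hK_it : ∫ p, K p ∂ν = ∫ r in Set.Ioi (0 : ℝ), ∫ ω, ∫ e, K (r, (ω, e)) ∂μS ∂μS := by
    rw [hν, integral_prod _ h_int2]
    refine integral_congr_ae ?_
    filter_upwards [h_int2.prod_right_ae] with r hr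
    exact integral_prod _ hr
  have hΓν : Γ = -∫ p, G p ∂ν := by rw [hΓ, hG_it]
  have hΓK : Γ = (1 / 2) * ∫ p, K p ∂ν := by rw [hΓν, key]; ring
  -- a.e. positivity of the radial variable
  have hae : ∀ᵐ p ∂ν, 0 < p.1 := by
    rw [ae_iff]
    have hs : {p : ℝ × (↥(sphere (0 : EuclideanSpace ℝ (Fin 3)) 1) × ↥(sphere (0 : EuclideanSpace ℝ (Fin 3)) 1)) | ¬0 < p.1} = (Set.Ioi (0 : ℝ))ᶜ ×ˢ Set.univ := by
      ext p; simp [Set.mem_Ioi]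
    rw [hν, hs, Measure.prod_prod, Measure.restrict_apply measurableSet_Ioi.compl]
    simp [Set.Iic_inter_Ioi]
  have hK_nonneg : 0 ≤ᵐ[ν] K := by
    filter_upwards [hae] with p hp
    have h1 : 0 ≤ σ (p.1 ^ 2)
        (inner ℝ (p.2.1 : EuclideanSpace ℝ (Fin 3)) (p.2.2 : EuclideanSpace ℝ (Fin 3))) * p.1 ^ 3 :=
      mul_nonneg (hσ_nonneg _ _) (by positivity)
    have h2 := log_sign' (hf_pos (p.1 • (p.2.1 : EuclideanSpace ℝ (Fin 3))))
      (hf_pos (p.1 • (p.2.2 : EuclideanSpace ℝ (Fin 3))))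
    calc (0 : ℝ) ≤ (σ (p.1 ^ 2)
          (inner ℝ (p.2.1 : EuclideanSpace ℝ (Fin 3)) (p.2.2 : EuclideanSpace ℝ (Fin 3))) *
          p.1 ^ 3) *
          ((f (p.1 • (p.2.1 : EuclideanSpace ℝ (Fin 3))) -
              f (p.1 • (p.2.2 : EuclideanSpace ℝ (Fin 3)))) *
            Real.log (f (p.1 • (p.2.1 : EuclideanSpace ℝ (Fin 3))) /
              f (p.1 • (p.2.2 : EuclideanSpace ℝ (Fin 3))))) := mul_nonneg h1 h2
      _ = K p := by simp only [hK]; ring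
  have hΓ_nonneg : 0 ≤ Γ := by
    rw [hΓK]
    have := integral_nonneg_of_ae hK_nonneg
    linarith
  refine ⟨by rw [hΓK, hK_it], hΓ_nonneg, ?_⟩
  intro hσ_pos hΓ0
  have hint0 : ∫ p, K p ∂ν = 0 := by
    rw [hΓK] at hΓ0; linarith
  have hK0 : K =ᵐ[ν] 0 :=
    (integral_eq_zero_iff_of_nonneg_ae hK_nonneg hintK).1 hint0
  filter_upwards [hae, hK0] with p hp hKp
  have hσr : 0 < σ (p.1 ^ 2)
      (inner ℝ (p.2.1 : EuclideanSpace ℝ (Fin 3)) (p.2.2 : EuclideanSpace ℝ (Fin 3))) * p.1 ^ 3 :=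
    mul_pos (hσ_pos _ _) (by positivity)
  have hKp' : (σ (p.1 ^ 2)
        (inner ℝ (p.2.1 : EuclideanSpace ℝ (Fin 3)) (p.2.2 : EuclideanSpace ℝ (Fin 3))) *
        p.1 ^ 3) *
        ((f (p.1 • (p.2.1 : EuclideanSpace ℝ (Fin 3))) -
            f (p.1 • (p.2.2 : EuclideanSpace ℝ (Fin 3)))) *
          Real.log (f (p.1 • (p.2.1 : EuclideanSpace ℝ (Fin 3))) /
            f (p.1 • (p.2.2 : EuclideanSpace ℝ (Fin 3))))) = 0 := by
    have : K p = 0 := hKp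
    rw [hK] at this
    linarith [this]
  have h0 : (f (p.1 • (p.2.1 : EuclideanSpace ℝ (Fin 3))) -
        f (p.1 • (p.2.2 : EuclideanSpace ℝ (Fin 3)))) *
      Real.log (f (p.1 • (p.2.1 : EuclideanSpace ℝ (Fin 3))) /
        f (p.1 • (p.2.2 : EuclideanSpace ℝ (Fin 3)))) = 0 :=
    (mul_eq_zero.1 hKp').resolve_left hσr.ne'
  exact eq_of_mul_log_eq_zero (hf_pos _) (hf_pos _) h0
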